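/- Let H be a Hopf algebra over a field k with bijective antipode. If V and W are finite-dimensional H-modules that are both tensor-reducible, then V ⊗ W is tensor-reducible. -/

import Mathlib

open TensorProduct

universe u

section TensorRep

variable (k H V W : Type u) [CommSemiring k] [Semiring H] [Bialgebra k H]
  [AddCommMonoid V] [Module k V] [Module H V] [IsScalarTower k H V] [SMulCommClass H k V]
  [AddCommMonoid W] [Module k W] [Module H W] [IsScalarTower k H W] [SMulCommClass H k W]

/-- The representation of the bialgebra `H` on the tensor product of two `H`-modules,
given by the comultiplication of `H`. -/
noncomputable def tensorRep : H →ₐ[k] Module.End k (V ⊗[k] W) :=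
  ((Module.endTensorEndAlgHom (R := k) (S := k) (A := k) (M := V) (N := W)).comp
    (Algebra.TensorProduct.map (Algebra.lsmul k k V) (Algebra.lsmul k k W))).comp
    (Bialgebra.comulAlgHom k H)

/-- The tensor product `V ⊗[k] W` of two `H`-modules, regarded as an `H`-module via the
comultiplication of `H` (a type synonym of `V ⊗[k] W`). -/
def ModuleTensor (_ : Type u) : Type u := V ⊗[k] W

variable {H}

noncomputable instance : AddCommMonoid (ModuleTensor k V W H) :=
  inferInstanceAs (AddCommMonoid (V ⊗[k] W))

noncomputable instance : Module k (ModuleTensor k V W H) :=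
  inferInstanceAs (Module k (V ⊗[k] W))

noncomputable instance instAddCommGroupModuleTensor
    {k V W : Type u} [CommSemiring k] [AddCommGroup V] [Module k V]
    [AddCommGroup W] [Module k W] (H : Type u) :
    AddCommGroup (ModuleTensor k V W H) :=
  inferInstanceAs (AddCommGroup (V ⊗[k] W))

variable (H)

/-- The `H`-module structure on `V ⊗[k] W` via the comultiplication of `H`. -/
noncomputable instance : Module H (ModuleTensor k V W H) :=
  Module.compHom (V ⊗[k] W) (tensorRep k H V W).toRingHom

instance : IsScalarTower k H (ModuleTensor k V W H) :=
  ⟨fun c h x => by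
    show (tensorRep k H V W (c • h)) x = c • ((tensorRep k H V W h) x)
    rw [map_smul]
    rfl⟩

instance : SMulCommClass H k (ModuleTensor k V W H) :=
  ⟨fun h c x => by
    show (tensorRep k H V W h) (c • x) = c • ((tensorRep k H V W h) x)
    exact (tensorRep k H V W h).map_smul c x⟩

end TensorRep

section Reducible

variable (k H : Type u) [Field k] [Ring H] [HopfAlgebra k H]

/-- An `H`-module `V` is left tensor-reducible if `V ⊗ W` is a semisimple `H`-module
for every irreducible finite-dimensional `H`-module `W`. -/
def LeftTensorReducible (V : Type u) [AddCommGroup V] [Module k V] [Module H V]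
    [IsScalarTower k H V] [SMulCommClass H k V] : Prop :=
  ∀ (W : Type u) [AddCommGroup W] [Module k W] [Module H W] [IsScalarTower k H W]
    [SMulCommClass H k W] [FiniteDimensional k W], IsSimpleModule H W →
      IsSemisimpleModule H (ModuleTensor k V W H)

/-- An `H`-module `V` is right tensor-reducible if `W ⊗ V` is a semisimple `H`-module
for every irreducible finite-dimensional `H`-module `W`. -/
def RightTensorReducible (V : Type u) [AddCommGroup V] [Module k V] [Module H V]
    [IsScalarTower k H V] [SMulCommClass H k V] : Prop :=
  ∀ (W : Type u) [AddCommGroup W] [Module k W] [Module H W] [IsScalarTower k H W]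
    [SMulCommClass H k W] [FiniteDimensional k W], IsSimpleModule H W →
      IsSemisimpleModule H (ModuleTensor k W V H)

/-- An `H`-module is tensor-reducible if it is both left and right tensor-reducible. -/
def TensorReducible (V : Type u) [AddCommGroup V] [Module k V] [Module H V]
    [IsScalarTower k H V] [SMulCommClass H k V] : Prop :=
  LeftTensorReducible k H V ∧ RightTensorReducible k H V

end Reducible

section AuxMaps

variable (k H : Type u) [CommSemiring k] [Semiring H] [Bialgebra k H]

variable (V W U : Type u)
  [AddCommMonoid V] [Module k V] [Module H V] [IsScalarTower k H V] [SMulCommClass H k V]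
  [AddCommMonoid W] [Module k W] [Module H W] [IsScalarTower k H W] [SMulCommClass H k W]
  [AddCommMonoid U] [Module k U] [Module H U] [IsScalarTower k H U] [SMulCommClass H k U]

/-- The action of `H ⊗ H` on `V ⊗ W`, acting componentwise. -/
noncomputable def actMap : H ⊗[k] H →ₐ[k] Module.End k (V ⊗[k] W) :=
  (Module.endTensorEndAlgHom (R := k) (S := k) (A := k) (M := V) (N := W)).comp
    (Algebra.TensorProduct.map (Algebra.lsmul k k V) (Algebra.lsmul k k W))

lemma actMap_tmul (a b : H) (v : V) (w : W) :
    actMap k H V W (a ⊗ₜ[k] b) (v ⊗ₜ[k] w) = (a • v) ⊗ₜ[k] (b • w) := rfl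

lemma moduleTensor_smul_def (h : H) (x : ModuleTensor k V W H) :
    h • x = actMap k H V W (Coalgebra.comul h) x := rfl

variable {V W}

variable (V' W' : Type u)
  [AddCommMonoid V'] [Module k V'] [Module H V'] [IsScalarTower k H V'] [SMulCommClass H k V']
  [AddCommMonoid W'] [Module k W'] [Module H W'] [IsScalarTower k H W'] [SMulCommClass H k W']

variable {V' W'}

lemma map_comm_actMap (f : V →ₗ[k] V') (g : W →ₗ[k] W')
    (hf : ∀ (h : H) (v : V), f (h • v) = h • f v)
    (hg : ∀ (h : H) (w : W), g (h • w) = h • g w)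
    (c : H ⊗[k] H) (x : V ⊗[k] W) :
    TensorProduct.map f g (actMap k H V W c x) = actMap k H V' W' c (TensorProduct.map f g x) := by
  induction c using TensorProduct.induction_on with
  | zero => simp
  | tmul a b =>
    have : TensorProduct.map f g ∘ₗ (actMap k H V W (a ⊗ₜ[k] b) : V ⊗[k] W →ₗ[k] V ⊗[k] W)
        = (actMap k H V' W' (a ⊗ₜ[k] b) : V' ⊗[k] W' →ₗ[k] V' ⊗[k] W')
          ∘ₗ TensorProduct.map f g := by
      apply TensorProduct.ext'
      intro v w
      simp only [LinearMap.comp_apply, TensorProduct.map_tmul, actMap_tmul, hf, hg]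
    exact LinearMap.congr_fun this x
  | add c d hc hd => simp [map_add, hc, hd]

/-- The `H`-linear map between tensor product modules induced by a pair of `H`-equivariant
`k`-linear maps. -/
noncomputable def mapModuleTensor (f : V →ₗ[k] V') (g : W →ₗ[k] W')
    (hf : ∀ (h : H) (v : V), f (h • v) = h • f v)
    (hg : ∀ (h : H) (w : W), g (h • w) = h • g w) :
    ModuleTensor k V W H →ₗ[H] ModuleTensor k V' W' H where
  toFun := TensorProduct.map f g
  map_add' := map_add _
  map_smul' h x := by
    show TensorProduct.map f g (actMap k H V W (Coalgebra.comul h) x)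
      = actMap k H V' W' (Coalgebra.comul h) (TensorProduct.map f g x)
    exact map_comm_actMap k H f g hf hg _ x

lemma mapModuleTensor_tmul (f : V →ₗ[k] V') (g : W →ₗ[k] W')
    (hf : ∀ (h : H) (v : V), f (h • v) = h • f v)
    (hg : ∀ (h : H) (w : W), g (h • w) = h • g w) (v : V) (w : W) :
    mapModuleTensor k H f g hf hg (v ⊗ₜ[k] w) = f v ⊗ₜ[k] g w := rfl

variable (V W)

/-- The action of `(H ⊗ H) ⊗ H` on `(V ⊗ W) ⊗ U`. -/
noncomputable def PhiL : (H ⊗[k] H) ⊗[k] H →ₗ[k] Module.End k ((V ⊗[k] W) ⊗[k] U) :=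
  (Module.endTensorEndAlgHom (R := k) (S := k) (A := k)
      (M := V ⊗[k] W) (N := U)).toLinearMap ∘ₗ
    TensorProduct.map (actMap k H V W).toLinearMap (Algebra.lsmul k k U).toLinearMap

lemma PhiL_tmul (d : H ⊗[k] H) (c : H) (y : V ⊗[k] W) (u : U) :
    PhiL k H V W U (d ⊗ₜ[k] c) (y ⊗ₜ[k] u) = (actMap k H V W d y) ⊗ₜ[k] (c • u) := rfl

/-- The action of `H ⊗ (H ⊗ H)` on `V ⊗ (W ⊗ U)`. -/
noncomputable def PhiR : H ⊗[k] (H ⊗[k] H) →ₗ[k] Module.End k (V ⊗[k] (W ⊗[k] U)) :=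
  (Module.endTensorEndAlgHom (R := k) (S := k) (A := k)
      (M := V) (N := W ⊗[k] U)).toLinearMap ∘ₗ
    TensorProduct.map (Algebra.lsmul k k V).toLinearMap (actMap k H W U).toLinearMap

lemma PhiR_tmul (a : H) (d : H ⊗[k] H) (v : V) (z : W ⊗[k] U) :
    PhiR k H V W U (a ⊗ₜ[k] d) (v ⊗ₜ[k] z) = (a • v) ⊗ₜ[k] (actMap k H W U d z) := rfl

lemma actMapL_eq (c : H ⊗[k] H) (x : ModuleTensor k V W H ⊗[k] U) :
    actMap k H (ModuleTensor k V W H) U c x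
      = PhiL k H V W U ((Coalgebra.comul (R := k) (A := H)).rTensor H c) x := by
  induction c using TensorProduct.induction_on with
  | zero => simp; rfl
  | tmul a b =>
    rw [LinearMap.rTensor_tmul]
    have : (actMap k H (ModuleTensor k V W H) U (a ⊗ₜ[k] b) :
          ModuleTensor k V W H ⊗[k] U →ₗ[k] ModuleTensor k V W H ⊗[k] U)
        = (PhiL k H V W U ((Coalgebra.comul a) ⊗ₜ[k] b) :
          (V ⊗[k] W) ⊗[k] U →ₗ[k] (V ⊗[k] W) ⊗[k] U) := by
      apply TensorProduct.ext'
      intro y u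
      rfl
    exact LinearMap.congr_fun this x
  | add c d hc hd => simp only [map_add, LinearMap.add_apply, hc, hd]; rfl

lemma actMapR_eq (c : H ⊗[k] H) (x : V ⊗[k] ModuleTensor k W U H) :
    actMap k H V (ModuleTensor k W U H) c x
      = PhiR k H V W U ((Coalgebra.comul (R := k) (A := H)).lTensor H c) x := by
  induction c using TensorProduct.induction_on with
  | zero => simp; rfl
  | tmul a b =>
    rw [LinearMap.lTensor_tmul]
    have : (actMap k H V (ModuleTensor k W U H) (a ⊗ₜ[k] b) :
          V ⊗[k] ModuleTensor k W U H →ₗ[k] V ⊗[k] ModuleTensor k W U H)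
        = (PhiR k H V W U (a ⊗ₜ[k] (Coalgebra.comul b)) :
          V ⊗[k] (W ⊗[k] U) →ₗ[k] V ⊗[k] (W ⊗[k] U)) := by
      apply TensorProduct.ext'
      intro v z
      rfl
    exact LinearMap.congr_fun this x
  | add c d hc hd => simp only [map_add, LinearMap.add_apply, hc, hd]; rfl

lemma assoc_Phi (t : (H ⊗[k] H) ⊗[k] H) (x : (V ⊗[k] W) ⊗[k] U) :
    TensorProduct.assoc k V W U (PhiL k H V W U t x)
      = PhiR k H V W U (TensorProduct.assoc k H H H t) (TensorProduct.assoc k V W U x) := by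
  induction t using TensorProduct.induction_on with
  | zero => simp
  | tmul d c =>
    induction d using TensorProduct.induction_on with
    | zero => simp [TensorProduct.zero_tmul]
    | tmul a b =>
      rw [TensorProduct.assoc_tmul]
      have : (TensorProduct.assoc k V W U).toLinearMap ∘ₗ PhiL k H V W U ((a ⊗ₜ[k] b) ⊗ₜ[k] c)
          = (PhiR k H V W U (a ⊗ₜ[k] (b ⊗ₜ[k] c)) : V ⊗[k] (W ⊗[k] U) →ₗ[k] _)
            ∘ₗ (TensorProduct.assoc k V W U).toLinearMap := by
        apply TensorProduct.ext_threefold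
        intro v w u
        simp only [LinearMap.comp_apply, LinearEquiv.coe_coe, PhiL_tmul, actMap_tmul,
          PhiR_tmul, TensorProduct.assoc_tmul]
      exact LinearMap.congr_fun this x
    | add d e hd he =>
      simp only [TensorProduct.add_tmul, map_add, LinearMap.add_apply, hd, he]
  | add t s ht hs => simp only [map_add, LinearMap.add_apply, ht, hs]

/-- The associator as an `H`-linear equivalence of tensor product modules. -/
noncomputable def assocModuleTensor :
    ModuleTensor k (ModuleTensor k V W H) U H ≃ₗ[H] ModuleTensor k V (ModuleTensor k W U H) H :=
  { TensorProduct.assoc k V W U with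
    map_smul' := fun h x => by
      show TensorProduct.assoc k V W U
          (actMap k H (ModuleTensor k V W H) U (Coalgebra.comul h) x)
        = actMap k H V (ModuleTensor k W U H) (Coalgebra.comul h)
            (TensorProduct.assoc k V W U x)
      erw [actMapL_eq, actMapR_eq, assoc_Phi, Coalgebra.coassoc_apply] }

end AuxMaps

section SemisimpleAux

variable {k H : Type u} [Field k] [Ring H] [HopfAlgebra k H]

variable (V M : Type u)
  [AddCommGroup V] [Module k V] [Module H V] [IsScalarTower k H V] [SMulCommClass H k V]
  [AddCommGroup M] [Module k M] [Module H M] [IsScalarTower k H M] [SMulCommClass H k M]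
  [FiniteDimensional k M]

instance submoduleSMulCommClass (N : Submodule H M) : SMulCommClass H k ↥N :=
  ⟨fun h c x => Subtype.ext (smul_comm h c (x : M))⟩

noncomputable instance submoduleFinDim (N : Submodule H M) : FiniteDimensional k ↥N :=
  FiniteDimensional.of_injective ((N.subtype).restrictScalars k) N.injective_subtype

lemma leftTensorReducible_semisimple (hV : LeftTensorReducible k H V)
    (hM : IsSemisimpleModule H M) : IsSemisimpleModule H (ModuleTensor k V M H) := by
  classical
  set S := {N : Submodule H M | IsSimpleModule H ↥N} with hS
  let ι : ∀ N : S, ModuleTensor k V ↥N.1 H →ₗ[H] ModuleTensor k V M H := fun N =>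
    mapModuleTensor k H (LinearMap.id : V →ₗ[k] V) ((N.1.subtype).restrictScalars k)
      (fun _ _ => rfl) (fun _ _ => rfl)
  let p : ∀ _ : S, Submodule H (ModuleTensor k V M H) := fun N => LinearMap.range (ι N)
  refine isSemisimpleModule_of_isSemisimpleModule_submodule' (p := p) (fun N => ?_) ?_
  · haveI : IsSemisimpleModule H (ModuleTensor k V ↥N.1 H) := hV ↥N.1 N.2
    exact IsSemisimpleModule.range (ι N)
  · rw [eq_top_iff]
    rintro x -
    refine TensorProduct.induction_on x (zero_mem _) (fun v m => ?_)
      (fun x y hx hy => add_mem hx hy)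
    have hm : m ∈ sSup S := by
      haveI := hM
      rw [hS, IsSemisimpleModule.sSup_simples_eq_top H M]; trivial
    rw [sSup_eq_iSup'] at hm
    refine Submodule.iSup_induction (motive := fun m => v ⊗ₜ[k] m ∈ ⨆ N : S, p N)
      (fun N : S => N.1) hm ?_ ?_ ?_
    · intro N m hmN
      refine le_iSup p N ?_
      show ι N (v ⊗ₜ[k] (⟨m, hmN⟩ : ↥N.1)) ∈ p N
      exact Set.mem_range_self _
    · show v ⊗ₜ[k] (0 : M) ∈ ⨆ N : S, p N
      rw [TensorProduct.tmul_zero]; exact zero_mem _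
    · intro a b ha hb
      show v ⊗ₜ[k] (a + b) ∈ ⨆ N : S, p N
      rw [TensorProduct.tmul_add]
      exact add_mem ha hb

lemma rightTensorReducible_semisimple (hV : RightTensorReducible k H V)
    (hM : IsSemisimpleModule H M) : IsSemisimpleModule H (ModuleTensor k M V H) := by
  classical
  set S := {N : Submodule H M | IsSimpleModule H ↥N} with hS
  let ι : ∀ N : S, ModuleTensor k ↥N.1 V H →ₗ[H] ModuleTensor k M V H := fun N =>
    mapModuleTensor k H ((N.1.subtype).restrictScalars k) (LinearMap.id : V →ₗ[k] V)
      (fun _ _ => rfl) (fun _ _ => rfl)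
  let p : ∀ _ : S, Submodule H (ModuleTensor k M V H) := fun N => LinearMap.range (ι N)
  refine isSemisimpleModule_of_isSemisimpleModule_submodule' (p := p) (fun N => ?_) ?_
  · haveI : IsSemisimpleModule H (ModuleTensor k ↥N.1 V H) := hV ↥N.1 N.2
    exact IsSemisimpleModule.range (ι N)
  · rw [eq_top_iff]
    rintro x -
    refine TensorProduct.induction_on x (zero_mem _) (fun m v => ?_)
      (fun x y hx hy => add_mem hx hy)
    have hm : m ∈ sSup S := by
      haveI := hM
      rw [hS, IsSemisimpleModule.sSup_simples_eq_top H M]; trivial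
    rw [sSup_eq_iSup'] at hm
    refine Submodule.iSup_induction (motive := fun m => m ⊗ₜ[k] v ∈ ⨆ N : S, p N)
      (fun N : S => N.1) hm ?_ ?_ ?_
    · intro N m hmN
      refine le_iSup p N ?_
      show ι N ((⟨m, hmN⟩ : ↥N.1) ⊗ₜ[k] v) ∈ p N
      exact Set.mem_range_self _
    · show (0 : M) ⊗ₜ[k] v ∈ ⨆ N : S, p N
      rw [TensorProduct.zero_tmul]; exact zero_mem _
    · intro a b ha hb
      show (a + b) ⊗ₜ[k] v ∈ ⨆ N : S, p N
      rw [TensorProduct.add_tmul]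
      exact add_mem ha hb

end SemisimpleAux


/-- If `V` and `W` are tensor-reducible `H`-modules over a Hopf algebra with bijective
antipode, then `V ⊗ W` is tensor-reducible. -/
theorem tensorReducible_tensor
    {k H : Type u} [Field k] [Ring H] [HopfAlgebra k H]
    (hS : Function.Bijective (HopfAlgebra.antipode (R := k) (A := H)))
    (V W : Type u) [AddCommGroup V] [Module k V] [Module H V] [IsScalarTower k H V]
    [SMulCommClass H k V] [FiniteDimensional k V]
    [AddCommGroup W] [Module k W] [Module H W] [IsScalarTower k H W]
    [SMulCommClass H k W] [FiniteDimensional k W]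
    (hV : TensorReducible k H V) (hW : TensorReducible k H W) :
    TensorReducible k H (ModuleTensor k V W H) := by
  constructor
  · intro U _ _ _ _ _ _ hU
    haveI : FiniteDimensional k (ModuleTensor k W U H) :=
      inferInstanceAs (FiniteDimensional k (W ⊗[k] U))
    haveI h1 : IsSemisimpleModule H (ModuleTensor k W U H) := hW.1 U hU
    haveI h2 : IsSemisimpleModule H (ModuleTensor k V (ModuleTensor k W U H) H) :=
      leftTensorReducible_semisimple V (ModuleTensor k W U H) hV.1 h1
    exact IsSemisimpleModule.congr (assocModuleTensor k H V W U)
  · intro U _ _ _ _ _ _ hU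
    haveI : FiniteDimensional k (ModuleTensor k U V H) :=
      inferInstanceAs (FiniteDimensional k (U ⊗[k] V))
    haveI h1 : IsSemisimpleModule H (ModuleTensor k U V H) := hV.2 U hU
    haveI h2 : IsSemisimpleModule H (ModuleTensor k (ModuleTensor k U V H) W H) :=
      rightTensorReducible_semisimple W (ModuleTensor k U V H) hW.2 h1
    exact IsSemisimpleModule.congr (assocModuleTensor k H U V W).symm
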